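/- Mutual entropy is nonnegative (subadditivity of von Neumann entropy): for every density matrix D on ℂ^m ⊗ ℂ^n with reduced density matrices D_A and D_B, one has S(D) ≤ S(D_A) + S(D_B), i.e. I_D(A:B) ≥ 0, with equality in the subadditivity inequality exactly when D = D_A ⊗ D_B. -/

import Mathlib

open scoped Kronecker ComplexOrder
open Matrix

noncomputable section

namespace TAL

/-- A density matrix: positive semidefinite with trace `1`. -/
def IsDensityMatrix {k : Type*} [Fintype k] [DecidableEq k] (D : Matrix k k ℂ) : Prop :=
  D.PosSemidef ∧ D.trace = 1

/-- Functional calculus for Hermitian matrices via the spectral decomposition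
(junk value `0` on non-Hermitian matrices). -/
def hermCalc {k : Type*} [Fintype k] [DecidableEq k] (f : ℝ → ℝ) (A : Matrix k k ℂ) :
    Matrix k k ℂ :=
  if hA : A.IsHermitian then
    (hA.eigenvectorUnitary : Matrix k k ℂ) *
      Matrix.diagonal (fun i => (f (hA.eigenvalues i) : ℂ)) *
        star (hA.eigenvectorUnitary : Matrix k k ℂ)
  else 0

/-- Matrix logarithm via the spectral decomposition. -/
def matLog {k : Type*} [Fintype k] [DecidableEq k] (A : Matrix k k ℂ) : Matrix k k ℂ :=
  hermCalc Real.log A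

/-- The von Neumann entropy `S(D) = -Tr (D log D)`, computed through the eigenvalues,
with the convention `0 * log 0 = 0` (junk value `0` on non-Hermitian matrices). -/
def vnEntropy {k : Type*} [Fintype k] [DecidableEq k] (A : Matrix k k ℂ) : ℝ :=
  if hA : A.IsHermitian then ∑ i, Real.negMulLog (hA.eigenvalues i) else 0

/-- The Umegaki relative entropy `S(D | E) = Tr (D (log D - log E))`. -/
def relEntropy {k : Type*} [Fintype k] [DecidableEq k] (D E : Matrix k k ℂ) : ℝ :=
  ((D * (matLog D - matLog E)).trace).re

/-- Partial trace over the second (right) tensor factor. -/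
def ptraceR {k₁ k₂ : Type*} [Fintype k₂] (D : Matrix (k₁ × k₂) (k₁ × k₂) ℂ) :
    Matrix k₁ k₁ ℂ :=
  Matrix.of fun i j => ∑ s : k₂, D (i, s) (j, s)

/-- Partial trace over the first (left) tensor factor. -/
def ptraceL {k₁ k₂ : Type*} [Fintype k₁] (D : Matrix (k₁ × k₂) (k₁ × k₂) ℂ) :
    Matrix k₂ k₂ ℂ :=
  Matrix.of fun i j => ∑ s : k₁, D (s, i) (s, j)

/-- The mutual entropy `I_D(A:B) = S(D_A) + S(D_B) - S(D)`. -/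
def mutualEntropy {k₁ k₂ : Type*} [Fintype k₁] [Fintype k₂] [DecidableEq k₁] [DecidableEq k₂]
    (D : Matrix (k₁ × k₂) (k₁ × k₂) ℂ) : ℝ :=
  vnEntropy (ptraceR D) + vnEntropy (ptraceL D) - vnEntropy D

/-- The Gibbs density matrix `e^{-β H} / Tr(e^{-β H})`. -/
def gibbs {k : Type*} [Fintype k] [DecidableEq k] (β : ℝ) (H : Matrix k k ℂ) :
    Matrix k k ℂ :=
  (NormedSpace.exp ((-(β : ℂ)) • H)).trace⁻¹ • NormedSpace.exp ((-(β : ℂ)) • H)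

/-- The free energy functional `F(D) = Tr(H D) - β⁻¹ S(D)` (real part of the trace). -/
def freeEnergy {k : Type*} [Fintype k] [DecidableEq k] (β : ℝ) (H D : Matrix k k ℂ) : ℝ :=
  ((H * D).trace).re - β⁻¹ * vnEntropy D

/-- The ℓ²-operator norm of a matrix. -/
def opNorm {k : Type*} [Fintype k] [DecidableEq k] (A : Matrix k k ℂ) : ℝ :=
  ‖(Matrix.toEuclideanCLM (𝕜 := ℂ) A : EuclideanSpace ℂ k →L[ℂ] EuclideanSpace ℂ k)‖

/-- The trace norm `‖X‖₁ = Tr ((X* X)^{1/2})`. -/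
def traceNorm {k : Type*} [Fintype k] [DecidableEq k] (X : Matrix k k ℂ) : ℝ :=
  ((((Matrix.posSemidef_conjTranspose_mul_self X).1.eigenvectorUnitary : Matrix k k ℂ) *
      Matrix.diagonal (((↑) : ℝ → ℂ) ∘ Real.sqrt ∘ (Matrix.posSemidef_conjTranspose_mul_self X).1.eigenvalues) *
        star ((Matrix.posSemidef_conjTranspose_mul_self X).1.eigenvectorUnitary : Matrix k k ℂ)).trace).re


/-- The perturbed density matrix `D^h = e^{log D + h} / Tr(e^{log D + h})`. -/
def pert {k : Type*} [Fintype k] [DecidableEq k] (D h : Matrix k k ℂ) : Matrix k k ℂ :=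
  (NormedSpace.exp (matLog D + h)).trace⁻¹ • NormedSpace.exp (matLog D + h)

section Subadditivity

open Finset Polynomial

/-! ### Auxiliary scalar inequalities (Klein inequality machinery) -/

private lemma klein_term {c x y : ℝ} (hc : 0 ≤ c) (hx : 0 ≤ x) (hy : 0 ≤ y)
    (h0 : y = 0 → c * x = 0) :
    c * (x - y) ≤ c * (x * Real.log x - x * Real.log y) ∧
    (c * (x - y) = c * (x * Real.log x - x * Real.log y) → c = 0 ∨ x = y) := by
  rcases hy.eq_or_lt with hy0 | hy0
  · rcases mul_eq_zero.mp (h0 hy0.symm) with hc0 | hx0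
    · simp [hc0]
    · subst hx0; simp [← hy0]
  rcases hx.eq_or_lt with hx0 | hx0
  · subst hx0
    constructor
    · simp only [Real.log_zero, mul_zero, zero_sub, zero_mul, sub_zero]
      nlinarith
    · intro h
      simp only [Real.log_zero, mul_zero, zero_sub, zero_mul, sub_zero] at h
      left; nlinarith
  · have hyx : 0 < y / x := div_pos hy0 hx0
    have key : Real.log (y / x) ≤ y / x - 1 := Real.log_le_sub_one_of_pos hyx
    have hlog : Real.log (y / x) = Real.log y - Real.log x :=
      Real.log_div (ne_of_gt hy0) (ne_of_gt hx0)
    have key2 : x - y ≤ x * Real.log x - x * Real.log y := by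
      have := mul_le_mul_of_nonneg_left key hx
      rw [hlog] at this
      have hx' : x * (y / x - 1) = y - x := by field_simp
      nlinarith [this]
    constructor
    · exact mul_le_mul_of_nonneg_left key2 hc
    · intro h
      rcases hc.eq_or_lt with hc0 | hc0
      · left; exact hc0.symm
      right
      by_contra hne
      have hne' : y / x ≠ 1 := by
        intro h1
        exact hne ((div_eq_one_iff_eq (ne_of_gt hx0)).mp h1).symm
      have key' : Real.log (y / x) < y / x - 1 := Real.log_lt_sub_one_of_pos hyx hne'
      have : x - y < x * Real.log x - x * Real.log y := by
        have := mul_lt_mul_of_pos_left key' hx0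
        rw [hlog] at this
        have hx' : x * (y / x - 1) = y - x := by field_simp
        nlinarith [this]
      nlinarith [mul_lt_mul_of_pos_left this hc0, h]

private lemma klein_core {ι κ : Type*} [Fintype ι] [Fintype κ]
    (p : ι → ℝ) (q : κ → ℝ) (P : ι → κ → ℝ)
    (hp : ∀ i, 0 ≤ p i) (hq : ∀ j, 0 ≤ q j) (hP : ∀ i j, 0 ≤ P i j)
    (hrow : ∀ i, ∑ j, P i j = 1) (hcol : ∀ j, ∑ i, P i j = 1)
    (hp1 : ∑ i, p i = 1) (hq1 : ∑ j, q j = 1)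
    (hsupp : ∀ j, q j = 0 → ∀ i, P i j * p i = 0) :
    0 ≤ (∑ i, p i * Real.log (p i)) - (∑ j, (∑ i, P i j * p i) * Real.log (q j)) ∧
    ((∑ i, p i * Real.log (p i)) - (∑ j, (∑ i, P i j * p i) * Real.log (q j)) = 0 →
      ∀ i j, P i j = 0 ∨ p i = q j) := by
  set F : ι × κ → ℝ := fun x => P x.1 x.2 * (p x.1 * Real.log (p x.1) - p x.1 * Real.log (q x.2))
    with hF
  set G : ι × κ → ℝ := fun x => P x.1 x.2 * (p x.1 - q x.2) with hG
  have hle : ∀ x : ι × κ, G x ≤ F x := fun x =>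
    (klein_term (hP x.1 x.2) (hp x.1) (hq x.2) (fun h => hsupp x.2 h x.1)).1
  have hGsum : ∑ x : ι × κ, G x = 0 := by
    rw [Fintype.sum_prod_type]
    simp only [hG, mul_sub, Finset.sum_sub_distrib]
    have h1 : ∑ i, ∑ j, P i j * p i = 1 := by
      simp_rw [← Finset.sum_mul, hrow, one_mul, hp1]
    have h2 : ∑ i, ∑ j, P i j * q j = 1 := by
      rw [Finset.sum_comm]
      simp_rw [← Finset.sum_mul, hcol, one_mul, hq1]
    rw [h1, h2, sub_self]
  have hFsum : ∑ x : ι × κ, F x =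
      (∑ i, p i * Real.log (p i)) - (∑ j, (∑ i, P i j * p i) * Real.log (q j)) := by
    rw [Fintype.sum_prod_type]
    simp only [hF, mul_sub, Finset.sum_sub_distrib]
    congr 1
    · calc ∑ i, ∑ j, P i j * (p i * Real.log (p i))
          = ∑ i, (∑ j, P i j) * (p i * Real.log (p i)) := by
            simp [Finset.sum_mul]
        _ = ∑ i, p i * Real.log (p i) := by simp [hrow]
    · rw [Finset.sum_comm]
      congr 1; ext j
      rw [Finset.sum_mul]
      congr 1; ext i
      ring
  constructor
  · rw [← hFsum, ← hGsum]
    exact Finset.sum_le_sum fun x _ => hle x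
  · intro h
    have hGF : ∑ x : ι × κ, G x = ∑ x : ι × κ, F x := by rw [hGsum, hFsum, h]
    have heach := (Finset.sum_eq_sum_iff_of_le (fun x _ => hle x)).mp hGF
    intro i j
    exact (klein_term (hP i j) (hp i) (hq j) (fun h' => hsupp j h' i)).2
      (heach (i, j) (Finset.mem_univ _))

/-! ### Spectral multiset invariance -/

private lemma my_charpoly_diagonal {k : Type*} [Fintype k] [DecidableEq k] (d : k → ℂ) :
    (Matrix.diagonal d).charpoly = ∏ i, (X - C (d i)) := by
  have h : charmatrix (Matrix.diagonal d) = Matrix.diagonal (fun i => X - C (d i)) := by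
    ext i j
    by_cases h : i = j
    · subst h; simp
    · simp [h, Matrix.charmatrix_apply_ne _ _ _ h, Matrix.diagonal_apply_ne _ h]
  rw [Matrix.charpoly, h, Matrix.det_diagonal]

private lemma my_charpoly_conj {k : Type*} [Fintype k] [DecidableEq k] (V A : Matrix k k ℂ)
    (hV : V ∈ Matrix.unitaryGroup k ℂ) :
    (V * A * star V).charpoly = A.charpoly := by
  have hVV : V * star V = 1 := Matrix.mem_unitaryGroup_iff.mp hV
  have hchar : charmatrix (V * A * star V) =
      V.map C * charmatrix A * (star V).map C := by
    unfold charmatrix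
    have hmap : ∀ (X Y : Matrix k k ℂ), (X * Y).map C = X.map C * Y.map C := fun X Y =>
      Matrix.map_mul (f := (C : ℂ →+* ℂ[X]))
    rw [mul_sub, sub_mul]
    congr 1
    · have hc : Matrix.scalar k (X : ℂ[X]) * V.map C = V.map C * Matrix.scalar k (X : ℂ[X]) :=
        Matrix.scalar_commute (X : ℂ[X]) (fun r' => Commute.all _ _) (V.map C)
      rw [← hc, mul_assoc, ← hmap, hVV]
      simp
    · simp only [RingHom.mapMatrix_apply]
      rw [← hmap, ← hmap]
  rw [Matrix.charpoly, hchar, Matrix.det_mul, Matrix.det_mul, Matrix.charpoly]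
  have h1 : (V.map C).det * ((star V).map C).det = 1 := by
    rw [← Matrix.det_mul, ← Matrix.map_mul (f := (C : ℂ →+* ℂ[X])), hVV]
    simp
  calc (V.map C).det * (charmatrix A).det * ((star V).map C).det
      = (V.map C).det * ((star V).map C).det * (charmatrix A).det := by ring
    _ = (charmatrix A).det := by rw [h1, one_mul]

private lemma eig_multiset {k : Type*} [Fintype k] [DecidableEq k] {M : Matrix k k ℂ}
    (hM : M.IsHermitian) {V : Matrix k k ℂ} (hV : V ∈ Matrix.unitaryGroup k ℂ) (d : k → ℝ)
    (hMd : M = V * Matrix.diagonal (fun i => (d i : ℂ)) * star V) (f : ℝ → ℝ) :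
    ∑ i, f (hM.eigenvalues i) = ∑ i, f (d i) := by
  classical
  have key : ∀ (c : k → ℝ), (∏ i, (X - C ((c i : ℂ)))).roots =
      Finset.univ.val.map (fun i => ((c i : ℝ) : ℂ)) := by
    intro c
    rw [← Polynomial.roots_multiset_prod_X_sub_C (Finset.univ.val.map fun i => ((c i : ℝ) : ℂ))]
    congr 1
    rw [Multiset.map_map]
    rfl
  have h1 : M.charpoly = ∏ i, (X - C ((d i : ℂ))) := by
    rw [hMd, my_charpoly_conj _ _ hV, my_charpoly_diagonal]
  have h2 : M.charpoly = ∏ i, (X - C ((hM.eigenvalues i : ℂ))) := by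
    nth_rewrite 1 [hM.spectral_theorem]
    rw [Unitary.conjStarAlgAut_apply, my_charpoly_conj _ _ (hM.eigenvectorUnitary).2, my_charpoly_diagonal]
    rfl
  have h3 : Finset.univ.val.map (fun i => ((d i : ℝ) : ℂ)) =
      Finset.univ.val.map (fun i => ((hM.eigenvalues i : ℝ) : ℂ)) := by
    rw [← key d, ← key hM.eigenvalues, ← h1, ← h2]
  have h4 : Finset.univ.val.map d = Finset.univ.val.map hM.eigenvalues := by
    apply Multiset.map_injective Complex.ofReal_injective
    rw [Multiset.map_map, Multiset.map_map]
    exact h3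
  calc ∑ i, f (hM.eigenvalues i) = ((Finset.univ.val.map hM.eigenvalues).map f).sum := by
        rw [Multiset.map_map]; rfl
    _ = ((Finset.univ.val.map d).map f).sum := by rw [h4]
    _ = ∑ i, f (d i) := by rw [Multiset.map_map]; rfl

/-! ### Kronecker and partial trace plumbing -/

variable {k₁ k₂ : Type*} [Fintype k₁] [Fintype k₂] [DecidableEq k₁] [DecidableEq k₂]

omit [Fintype k₁] [Fintype k₂] [DecidableEq k₁] [DecidableEq k₂] in
private lemma kron_conjTranspose (A : Matrix k₁ k₁ ℂ) (B : Matrix k₂ k₂ ℂ) :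
    (A ⊗ₖ B)ᴴ = Aᴴ ⊗ₖ Bᴴ := by
  ext a b
  simp [Matrix.conjTranspose_apply, Matrix.kroneckerMap_apply]

private lemma kron_unitary {A : Matrix k₁ k₁ ℂ} {B : Matrix k₂ k₂ ℂ}
    (hA : A ∈ Matrix.unitaryGroup k₁ ℂ) (hB : B ∈ Matrix.unitaryGroup k₂ ℂ) :
    A ⊗ₖ B ∈ Matrix.unitaryGroup (k₁ × k₂) ℂ := by
  rw [Matrix.mem_unitaryGroup_iff] at *
  have h : star (A ⊗ₖ B) = (star A) ⊗ₖ (star B) := kron_conjTranspose A B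
  rw [h, ← Matrix.mul_kronecker_mul, hA, hB, Matrix.one_kronecker_one]

private lemma mul3_apply {K : Type*} [Fintype K] (X D Y : Matrix K K ℂ) (e f : K) :
    (X * D * Y) e f = ∑ a, ∑ b, X e a * D a b * Y b f := by
  calc (X * D * Y) e f = ∑ b, (∑ a, X e a * D a b) * Y b f := by
        simp [Matrix.mul_apply]
    _ = ∑ b, ∑ a, X e a * D a b * Y b f := by simp [Finset.sum_mul]
    _ = ∑ a, ∑ b, X e a * D a b * Y b f := Finset.sum_comm

private lemma ptraceR_conj_kron (D : Matrix (k₁ × k₂) (k₁ × k₂) ℂ)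
    (A A' : Matrix k₁ k₁ ℂ) (B B' : Matrix k₂ k₂ ℂ) (hBB : B' * B = 1) :
    ptraceR ((A ⊗ₖ B) * D * (A' ⊗ₖ B')) = A * ptraceR D * A' := by
  ext i j
  have hdelta : ∀ x y : k₂, ∑ s, B s y * B' x s = (1 : Matrix k₂ k₂ ℂ) x y := by
    intro x y
    rw [← hBB, Matrix.mul_apply]
    exact Finset.sum_congr rfl fun s _ => mul_comm _ _
  show ∑ s, ((A ⊗ₖ B) * D * (A' ⊗ₖ B')) (i, s) (j, s) = (A * ptraceR D * A') i j
  calc ∑ s, ((A ⊗ₖ B) * D * (A' ⊗ₖ B')) (i, s) (j, s)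
      = ∑ s, ∑ a, ∑ b, (A i a.1 * B s a.2) * D a b * (A' b.1 j * B' b.2 s) := by
        simp [mul3_apply, Matrix.kroneckerMap_apply]
    _ = ∑ a, ∑ b, ∑ s, (A i a.1 * B s a.2) * D a b * (A' b.1 j * B' b.2 s) := by
        rw [Finset.sum_comm]
        exact Finset.sum_congr rfl fun a _ => Finset.sum_comm
    _ = ∑ a, ∑ b, (A i a.1 * D a b * A' b.1 j) * ∑ s, B s a.2 * B' b.2 s := by
        refine Finset.sum_congr rfl fun a _ => Finset.sum_congr rfl fun b _ => ?_
        rw [Finset.mul_sum]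
        exact Finset.sum_congr rfl fun s _ => by ring
    _ = ∑ a, ∑ b, (A i a.1 * D a b * A' b.1 j) * (1 : Matrix k₂ k₂ ℂ) b.2 a.2 := by
        simp_rw [hdelta]
    _ = ∑ a₁, ∑ a₂, ∑ b₁, ∑ b₂, (A i a₁ * D (a₁, a₂) (b₁, b₂) * A' b₁ j) *
          (if b₂ = a₂ then 1 else 0) := by
        rw [Fintype.sum_prod_type]
        refine Finset.sum_congr rfl fun a₁ _ => Finset.sum_congr rfl fun a₂ _ => ?_
        rw [Fintype.sum_prod_type]
        refine Finset.sum_congr rfl fun b₁ _ => Finset.sum_congr rfl fun b₂ _ => ?_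
        rw [Matrix.one_apply]
    _ = ∑ a₁, ∑ b₁, ∑ t, A i a₁ * D (a₁, t) (b₁, t) * A' b₁ j := by
        refine Finset.sum_congr rfl fun a₁ _ => ?_
        rw [Finset.sum_comm]
        refine Finset.sum_congr rfl fun b₁ _ => ?_
        rw [Finset.sum_comm]
        simp
    _ = (A * ptraceR D * A') i j := by
        rw [mul3_apply]
        refine Finset.sum_congr rfl fun a₁ _ => Finset.sum_congr rfl fun b₁ _ => ?_
        show ∑ t, A i a₁ * D (a₁, t) (b₁, t) * A' b₁ j
          = A i a₁ * (∑ s, D (a₁, s) (b₁, s)) * A' b₁ j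
        rw [Finset.mul_sum, Finset.sum_mul]

private lemma ptraceL_conj_kron (D : Matrix (k₁ × k₂) (k₁ × k₂) ℂ)
    (A A' : Matrix k₁ k₁ ℂ) (B B' : Matrix k₂ k₂ ℂ) (hAA : A' * A = 1) :
    ptraceL ((A ⊗ₖ B) * D * (A' ⊗ₖ B')) = B * ptraceL D * B' := by
  ext i j
  have hdelta : ∀ x y : k₁, ∑ s, A s y * A' x s = (1 : Matrix k₁ k₁ ℂ) x y := by
    intro x y
    rw [← hAA, Matrix.mul_apply]
    exact Finset.sum_congr rfl fun s _ => mul_comm _ _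
  show ∑ s, ((A ⊗ₖ B) * D * (A' ⊗ₖ B')) (s, i) (s, j) = (B * ptraceL D * B') i j
  calc ∑ s, ((A ⊗ₖ B) * D * (A' ⊗ₖ B')) (s, i) (s, j)
      = ∑ s, ∑ a, ∑ b, (A s a.1 * B i a.2) * D a b * (A' b.1 s * B' b.2 j) := by
        simp [mul3_apply, Matrix.kroneckerMap_apply]
    _ = ∑ a, ∑ b, ∑ s, (A s a.1 * B i a.2) * D a b * (A' b.1 s * B' b.2 j) := by
        rw [Finset.sum_comm]
        exact Finset.sum_congr rfl fun a _ => Finset.sum_comm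
    _ = ∑ a, ∑ b, (B i a.2 * D a b * B' b.2 j) * ∑ s, A s a.1 * A' b.1 s := by
        refine Finset.sum_congr rfl fun a _ => Finset.sum_congr rfl fun b _ => ?_
        rw [Finset.mul_sum]
        exact Finset.sum_congr rfl fun s _ => by ring
    _ = ∑ a, ∑ b, (B i a.2 * D a b * B' b.2 j) * (1 : Matrix k₁ k₁ ℂ) b.1 a.1 := by
        simp_rw [hdelta]
    _ = ∑ a₂, ∑ a₁, ∑ b₂, ∑ b₁, (B i a₂ * D (a₁, a₂) (b₁, b₂) * B' b₂ j) *
          (if b₁ = a₁ then 1 else 0) := by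
        rw [Fintype.sum_prod_type, Finset.sum_comm]
        refine Finset.sum_congr rfl fun a₂ _ => Finset.sum_congr rfl fun a₁ _ => ?_
        rw [Fintype.sum_prod_type, Finset.sum_comm]
        refine Finset.sum_congr rfl fun b₂ _ => Finset.sum_congr rfl fun b₁ _ => ?_
        rw [Matrix.one_apply]
    _ = ∑ a₂, ∑ b₂, ∑ t, B i a₂ * D (t, a₂) (t, b₂) * B' b₂ j := by
        refine Finset.sum_congr rfl fun a₂ _ => ?_
        rw [Finset.sum_comm]
        refine Finset.sum_congr rfl fun b₂ _ => ?_
        rw [Finset.sum_comm]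
        simp
    _ = (B * ptraceL D * B') i j := by
        rw [mul3_apply]
        refine Finset.sum_congr rfl fun a₂ _ => Finset.sum_congr rfl fun b₂ _ => ?_
        show ∑ t, B i a₂ * D (t, a₂) (t, b₂) * B' b₂ j
          = B i a₂ * (∑ s, D (s, a₂) (s, b₂)) * B' b₂ j
        rw [Finset.mul_sum, Finset.sum_mul]

omit [DecidableEq k₁] [DecidableEq k₂] in
private lemma ptraceR_trace (D : Matrix (k₁ × k₂) (k₁ × k₂) ℂ) :
    (ptraceR D).trace = D.trace := by
  simp [Matrix.trace, Matrix.diag, ptraceR, Fintype.sum_prod_type]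

omit [DecidableEq k₁] [DecidableEq k₂] in
private lemma ptraceL_trace (D : Matrix (k₁ × k₂) (k₁ × k₂) ℂ) :
    (ptraceL D).trace = D.trace := by
  rw [Matrix.trace, Matrix.trace, Fintype.sum_prod_type, Finset.sum_comm]
  simp [Matrix.diag, ptraceL]

private lemma ptraceR_posSemidef {D : Matrix (k₁ × k₂) (k₁ × k₂) ℂ} (hD : D.PosSemidef) :
    (ptraceR D).PosSemidef := by
  refine Matrix.PosSemidef.of_dotProduct_mulVec_nonneg ?_ ?_
  · ext i j
    show star (ptraceR D j i) = ptraceR D i j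
    show star (∑ s, D (j, s) (i, s)) = ∑ s, D (i, s) (j, s)
    rw [star_sum]
    refine Finset.sum_congr rfl fun s _ => ?_
    have := hD.1
    rw [Matrix.IsHermitian] at this
    conv_rhs => rw [← this]
    simp [Matrix.conjTranspose_apply]
  · intro x
    set y : k₂ → (k₁ × k₂) → ℂ := fun s a => if a.2 = s then x a.1 else 0 with hy
    have expand : ∀ (v : (k₁ × k₂) → ℂ), star v ⬝ᵥ D *ᵥ v
        = ∑ a, ∑ b, star (v a) * D a b * v b := by
      intro v
      simp [dotProduct, Matrix.mulVec, Finset.mul_sum, mul_assoc]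
    have outer : ∀ s, ∑ a, ∑ b, star (y s a) * D a b * y s b
        = ∑ a₁, ∑ b₁, star (x a₁) * D (a₁, s) (b₁, s) * x b₁ := by
      intro s
      have inner : ∀ (c : ℂ) (a : k₁ × k₂),
          ∑ b, c * D a b * y s b = ∑ b₁, c * D a (b₁, s) * x b₁ := by
        intro c a
        rw [Fintype.sum_prod_type]
        refine Finset.sum_congr rfl fun b₁ _ => ?_
        simp [hy]
      rw [Fintype.sum_prod_type]
      refine Finset.sum_congr rfl fun a₁ _ => ?_
      have collapse : ∀ a₂ : k₂, ∑ b, star (y s (a₁, a₂)) * D (a₁, a₂) b * y s b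
          = if a₂ = s then ∑ b₁, star (x a₁) * D (a₁, s) (b₁, s) * x b₁ else 0 := by
        intro a₂
        by_cases h : a₂ = s
        · rw [if_pos h]
          have hst : star (y s (a₁, a₂)) = star (x a₁) := by simp [hy, h]
          simp_rw [hst]
          rw [h]
          exact inner _ _
        · rw [if_neg h]
          have hst : star (y s (a₁, a₂)) = 0 := by simp [hy, h]
          simp [hst]
      simp_rw [collapse]
      simp
    have key : star x ⬝ᵥ (ptraceR D) *ᵥ x = ∑ s, star (y s) ⬝ᵥ D *ᵥ (y s) := by
      have e2 : star x ⬝ᵥ (ptraceR D) *ᵥ x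
          = ∑ a₁, ∑ b₁, star (x a₁) * ((∑ s, D (a₁, s) (b₁, s)) * x b₁) := by
        simp [dotProduct, Matrix.mulVec, ptraceR, Finset.mul_sum]
      rw [e2]
      have e3 : ∀ s, star (y s) ⬝ᵥ D *ᵥ (y s)
          = ∑ a₁, ∑ b₁, star (x a₁) * D (a₁, s) (b₁, s) * x b₁ := fun s => by
        rw [expand (y s), outer s]
      simp_rw [e3]
      conv_rhs => rw [Finset.sum_comm]
      refine Finset.sum_congr rfl fun a₁ _ => ?_
      conv_rhs => rw [Finset.sum_comm]
      refine Finset.sum_congr rfl fun b₁ _ => ?_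
      rw [Finset.sum_mul, Finset.mul_sum]
      exact Finset.sum_congr rfl fun s _ => by ring
    rw [key]
    exact Finset.sum_nonneg fun s _ => hD.dotProduct_mulVec_nonneg _

private lemma ptraceL_posSemidef {D : Matrix (k₁ × k₂) (k₁ × k₂) ℂ} (hD : D.PosSemidef) :
    (ptraceL D).PosSemidef := by
  refine Matrix.PosSemidef.of_dotProduct_mulVec_nonneg ?_ ?_
  · ext i j
    show star (ptraceL D j i) = ptraceL D i j
    show star (∑ s, D (s, j) (s, i)) = ∑ s, D (s, i) (s, j)
    rw [star_sum]
    refine Finset.sum_congr rfl fun s _ => ?_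
    have := hD.1
    rw [Matrix.IsHermitian] at this
    conv_rhs => rw [← this]
    simp [Matrix.conjTranspose_apply]
  · intro x
    set y : k₁ → (k₁ × k₂) → ℂ := fun s a => if a.1 = s then x a.2 else 0 with hy
    have expand : ∀ (v : (k₁ × k₂) → ℂ), star v ⬝ᵥ D *ᵥ v
        = ∑ a, ∑ b, star (v a) * D a b * v b := by
      intro v
      simp [dotProduct, Matrix.mulVec, Finset.mul_sum, mul_assoc]
    have outer : ∀ s, ∑ a, ∑ b, star (y s a) * D a b * y s b
        = ∑ a₂, ∑ b₂, star (x a₂) * D (s, a₂) (s, b₂) * x b₂ := by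
      intro s
      have inner : ∀ (c : ℂ) (a : k₁ × k₂),
          ∑ b, c * D a b * y s b = ∑ b₂, c * D a (s, b₂) * x b₂ := by
        intro c a
        rw [Fintype.sum_prod_type, Finset.sum_comm]
        refine Finset.sum_congr rfl fun b₂ _ => ?_
        simp [hy]
      rw [Fintype.sum_prod_type, Finset.sum_comm]
      refine Finset.sum_congr rfl fun a₂ _ => ?_
      have collapse : ∀ a₁ : k₁, ∑ b, star (y s (a₁, a₂)) * D (a₁, a₂) b * y s b
          = if a₁ = s then ∑ b₂, star (x a₂) * D (s, a₂) (s, b₂) * x b₂ else 0 := by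
        intro a₁
        by_cases h : a₁ = s
        · rw [if_pos h]
          have hst : star (y s (a₁, a₂)) = star (x a₂) := by simp [hy, h]
          simp_rw [hst]
          rw [h]
          exact inner _ _
        · rw [if_neg h]
          have hst : star (y s (a₁, a₂)) = 0 := by simp [hy, h]
          simp [hst]
      simp_rw [collapse]
      simp
    have key : star x ⬝ᵥ (ptraceL D) *ᵥ x = ∑ s, star (y s) ⬝ᵥ D *ᵥ (y s) := by
      have e2 : star x ⬝ᵥ (ptraceL D) *ᵥ x
          = ∑ a₂, ∑ b₂, star (x a₂) * ((∑ s, D (s, a₂) (s, b₂)) * x b₂) := by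
        simp [dotProduct, Matrix.mulVec, ptraceL, Finset.mul_sum]
      rw [e2]
      have e3 : ∀ s, star (y s) ⬝ᵥ D *ᵥ (y s)
          = ∑ a₂, ∑ b₂, star (x a₂) * D (s, a₂) (s, b₂) * x b₂ := fun s => by
        rw [expand (y s), outer s]
      simp_rw [e3]
      conv_rhs => rw [Finset.sum_comm]
      refine Finset.sum_congr rfl fun a₂ _ => ?_
      conv_rhs => rw [Finset.sum_comm]
      refine Finset.sum_congr rfl fun b₂ _ => ?_
      rw [Finset.sum_mul, Finset.mul_sum]
      exact Finset.sum_congr rfl fun s _ => by ring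
    rw [key]
    exact Finset.sum_nonneg fun s _ => hD.dotProduct_mulVec_nonneg _

private lemma trace_conj_unitary {K : Type*} [Fintype K] [DecidableEq K]
    {V : Matrix K K ℂ} (hV : V ∈ Matrix.unitaryGroup K ℂ) (M : Matrix K K ℂ) :
    (V * M * star V).trace = M.trace := by
  rw [Matrix.trace_mul_cycle, Matrix.mem_unitaryGroup_iff'.mp hV, Matrix.one_mul]

end Subadditivity

/-- subadditivity of von Neumann entropy (nonnegativity of the mutual
entropy), with equality exactly for product states. -/
theorem vnEntropy_subadditive {m n : ℕ}
    (D : Matrix (Fin m × Fin n) (Fin m × Fin n) ℂ) (hD : IsDensityMatrix D) :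
    vnEntropy D ≤ vnEntropy (ptraceR D) + vnEntropy (ptraceL D) ∧
    (vnEntropy D = vnEntropy (ptraceR D) + vnEntropy (ptraceL D) ↔
      D = ptraceR D ⊗ₖ ptraceL D) := by
  classical
  obtain ⟨hPSD, htr⟩ := hD
  have hH : D.IsHermitian := hPSD.1
  have hA : (ptraceR D).PosSemidef := ptraceR_posSemidef hPSD
  have hB : (ptraceL D).PosSemidef := ptraceL_posSemidef hPSD
  have htrA : (ptraceR D).trace = 1 := by rw [ptraceR_trace, htr]
  have htrB : (ptraceL D).trace = 1 := by rw [ptraceL_trace, htr]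
  set p : Fin m × Fin n → ℝ := hH.eigenvalues with hpdef
  set a : Fin m → ℝ := hA.1.eigenvalues with hadef
  set b : Fin n → ℝ := hB.1.eigenvalues with hbdef
  set U : Matrix (Fin m × Fin n) (Fin m × Fin n) ℂ := (hH.eigenvectorUnitary : Matrix (Fin m × Fin n) (Fin m × Fin n) ℂ) with hUdef
  set UA : Matrix (Fin m) (Fin m) ℂ := (hA.1.eigenvectorUnitary : Matrix (Fin m) (Fin m) ℂ) with hUAdef
  set UB : Matrix (Fin n) (Fin n) ℂ := (hB.1.eigenvectorUnitary : Matrix (Fin n) (Fin n) ℂ) with hUBdef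
  have hU : U ∈ Matrix.unitaryGroup _ ℂ := hH.eigenvectorUnitary.2
  have hUA : UA ∈ Matrix.unitaryGroup _ ℂ := hA.1.eigenvectorUnitary.2
  have hUB : UB ∈ Matrix.unitaryGroup _ ℂ := hB.1.eigenvectorUnitary.2
  set V : Matrix (Fin m × Fin n) (Fin m × Fin n) ℂ := UA ⊗ₖ UB with hVdef
  have hV : V ∈ Matrix.unitaryGroup _ ℂ := kron_unitary hUA hUB
  set W : Matrix (Fin m × Fin n) (Fin m × Fin n) ℂ := star U * V with hWdef
  have hW : W ∈ Matrix.unitaryGroup _ ℂ := mul_mem (Unitary.star_mem hU) hV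
  set P : (Fin m × Fin n) → (Fin m × Fin n) → ℝ :=
    fun α β => Complex.normSq (W α β) with hPdef
  set q : Fin m × Fin n → ℝ := fun β => a β.1 * b β.2 with hqdef
  set r : Fin m × Fin n → ℝ := fun β => ∑ α, P α β * p α with hrdef
  -- spectral decompositions
  have hspec : D = U * Matrix.diagonal (fun α => ((p α : ℝ) : ℂ)) * star U :=
    hH.spectral_theorem
  have hspecA : ptraceR D = UA * Matrix.diagonal (fun i => ((a i : ℝ) : ℂ)) * star UA :=
    hA.1.spectral_theorem
  have hspecB : ptraceL D = UB * Matrix.diagonal (fun k => ((b k : ℝ) : ℂ)) * star UB :=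
    hB.1.spectral_theorem
  have hstarV : star V = (star UA) ⊗ₖ (star UB) := kron_conjTranspose UA UB
  -- nonnegativity
  have hpnn : ∀ α, 0 ≤ p α := hPSD.eigenvalues_nonneg
  have hann : ∀ i, 0 ≤ a i := hA.eigenvalues_nonneg
  have hbnn : ∀ k, 0 ≤ b k := hB.eigenvalues_nonneg
  have hqnn : ∀ β, 0 ≤ q β := fun β => mul_nonneg (hann β.1) (hbnn β.2)
  have hPnn : ∀ α β, 0 ≤ P α β := fun α β => Complex.normSq_nonneg _
  have hrnn : ∀ β, 0 ≤ r β :=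
    fun β => Finset.sum_nonneg fun α _ => mul_nonneg (hPnn α β) (hpnn α)
  -- sums of eigenvalues are 1
  have sum_eig : ∀ {k : Type} [Fintype k] [DecidableEq k] (M : Matrix k k ℂ)
      (Vu : Matrix k k ℂ) (_ : Vu ∈ Matrix.unitaryGroup k ℂ) (d : k → ℝ),
      M = Vu * Matrix.diagonal (fun i => ((d i : ℝ) : ℂ)) * star Vu → M.trace = 1 →
      ∑ i, d i = 1 := by
    intro k _ _ M Vu hVu d hMd hM1
    rw [hMd, trace_conj_unitary hVu, Matrix.trace_diagonal] at hM1
    exact_mod_cast hM1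
  have hp1 : ∑ α, p α = 1 := sum_eig D U hU p hspec htr
  have ha1 : ∑ i, a i = 1 := sum_eig (ptraceR D) UA hUA a hspecA htrA
  have hb1 : ∑ k, b k = 1 := sum_eig (ptraceL D) UB hUB b hspecB htrB
  have hq1 : ∑ β, q β = 1 := by
    rw [hqdef, Fintype.sum_prod_type]
    simp_rw [← Finset.mul_sum, hb1, mul_one, ha1]
  -- row and column sums of P
  have hProw : ∀ α, ∑ β, P α β = 1 := by
    intro α
    have h1 : (W * star W) α α = 1 := by
      rw [Matrix.mem_unitaryGroup_iff.mp hW, Matrix.one_apply_eq]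
    rw [Matrix.mul_apply] at h1
    have h2 : ∀ β, W α β * star W β α = ((P α β : ℝ) : ℂ) := by
      intro β
      rw [Matrix.star_apply, RCLike.star_def, Complex.mul_conj]
    simp_rw [h2] at h1
    exact_mod_cast h1
  have hPcol : ∀ β, ∑ α, P α β = 1 := by
    intro β
    have h1 : (star W * W) β β = 1 := by
      rw [Matrix.mem_unitaryGroup_iff'.mp hW, Matrix.one_apply_eq]
    rw [Matrix.mul_apply] at h1
    have h2 : ∀ α, star W β α * W α β = ((P α β : ℝ) : ℂ) := by
      intro α
      rw [Matrix.star_apply, RCLike.star_def, ← Complex.normSq_eq_conj_mul_self]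
    simp_rw [h2] at h1
    exact_mod_cast h1
  -- diagonal entries of the conjugated matrix
  have hWdiag : star V * D * V = star W * Matrix.diagonal (fun α => ((p α : ℝ) : ℂ)) * W := by
    have hsw : star W = star V * U := by rw [hWdef, StarMul.star_mul, star_star]
    rw [hsw, hWdef]
    calc star V * D * V
        = star V * (U * Matrix.diagonal (fun α => ((p α : ℝ) : ℂ)) * star U) * V := by
          rw [← hspec]
      _ = star V * U * Matrix.diagonal (fun α => ((p α : ℝ) : ℂ)) * (star U * V) := by
          simp only [Matrix.mul_assoc]
  have hdiag : ∀ β, (star V * D * V) β β = ((r β : ℝ) : ℂ) := by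
    intro β
    rw [hWdiag, Matrix.mul_apply]
    have h2 : ∀ α, (star W * Matrix.diagonal (fun γ => ((p γ : ℝ) : ℂ))) β α * W α β
        = ((P α β * p α : ℝ) : ℂ) := by
      intro α
      rw [Matrix.mul_diagonal, Matrix.star_apply, RCLike.star_def]
      push_cast
      rw [Complex.normSq_eq_conj_mul_self]
      ring
    simp_rw [h2, hrdef]
    push_cast
    rfl
  -- partial sums of r
  have hrA : ∀ i, ∑ s, r (i, s) = a i := by
    intro i
    have h1 : ptraceR (star V * D * V) = star UA * ptraceR D * UA := by
      rw [hstarV]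
      exact ptraceR_conj_kron D (star UA) UA (star UB) UB (Matrix.mem_unitaryGroup_iff.mp hUB)
    have h2 : (star UA * ptraceR D * UA) i i = ((a i : ℝ) : ℂ) := by
      have hdg := hA.1.conjStarAlgAut_star_eigenvectorUnitary
      simp only [Unitary.conjStarAlgAut_apply, Unitary.coe_star, star_star] at hdg
      rw [hdg]
      exact Matrix.diagonal_apply_eq _ i
    have h3 : ptraceR (star V * D * V) i i = ∑ s, ((r (i, s) : ℝ) : ℂ) := by
      show ∑ s, (star V * D * V) (i, s) (i, s) = _
      exact Finset.sum_congr rfl fun s _ => hdiag (i, s)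
    have h4 : (∑ s, ((r (i, s) : ℝ) : ℂ)) = ((a i : ℝ) : ℂ) := by
      rw [← h3, h1, h2]
    exact_mod_cast h4
  have hrB : ∀ k, ∑ i, r (i, k) = b k := by
    intro k
    have h1 : ptraceL (star V * D * V) = star UB * ptraceL D * UB := by
      rw [hstarV]
      exact ptraceL_conj_kron D (star UA) UA (star UB) UB (Matrix.mem_unitaryGroup_iff.mp hUA)
    have h2 : (star UB * ptraceL D * UB) k k = ((b k : ℝ) : ℂ) := by
      have hdg := hB.1.conjStarAlgAut_star_eigenvectorUnitary
      simp only [Unitary.conjStarAlgAut_apply, Unitary.coe_star, star_star] at hdg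
      rw [hdg]
      exact Matrix.diagonal_apply_eq _ k
    have h3 : ptraceL (star V * D * V) k k = ∑ i, ((r (i, k) : ℝ) : ℂ) := by
      show ∑ i, (star V * D * V) (i, k) (i, k) = _
      exact Finset.sum_congr rfl fun i _ => hdiag (i, k)
    have h4 : (∑ i, ((r (i, k) : ℝ) : ℂ)) = ((b k : ℝ) : ℂ) := by
      rw [← h3, h1, h2]
    exact_mod_cast h4
  -- support condition
  have hr0 : ∀ β, q β = 0 → r β = 0 := by
    intro β hqβ
    rcases mul_eq_zero.mp hqβ with h0 | h0
    · have hsum : ∑ s, r (β.1, s) = 0 := by rw [hrA, h0]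
      have := (Finset.sum_eq_zero_iff_of_nonneg
        (fun s _ => hrnn (β.1, s))).mp hsum β.2 (Finset.mem_univ _)
      simpa using this
    · have hsum : ∑ i, r (i, β.2) = 0 := by rw [hrB, h0]
      have := (Finset.sum_eq_zero_iff_of_nonneg
        (fun i _ => hrnn (i, β.2))).mp hsum β.1 (Finset.mem_univ _)
      simpa using this
  have hsupp : ∀ β, q β = 0 → ∀ α, P α β * p α = 0 := by
    intro β hqβ α
    exact (Finset.sum_eq_zero_iff_of_nonneg
      (fun γ _ => mul_nonneg (hPnn γ β) (hpnn γ))).mp (hr0 β hqβ) α (Finset.mem_univ _)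
  obtain ⟨hineq, heqc⟩ :=
    klein_core p q P hpnn hqnn hPnn hProw hPcol hp1 hq1 hsupp
  -- identify the r-sum with the entropies of the marginals
  have hsplit : ∑ β, r β * Real.log (q β)
      = (∑ i, a i * Real.log (a i)) + (∑ k, b k * Real.log (b k)) := by
    have step1 : ∀ β, r β * Real.log (q β)
        = r β * Real.log (a β.1) + r β * Real.log (b β.2) := by
      intro β
      by_cases h0 : a β.1 = 0
      · rw [hr0 β (by rw [hqdef]; simp [h0])]; ring
      by_cases h1 : b β.2 = 0
      · rw [hr0 β (by rw [hqdef]; simp [h1])]; ring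
      have : Real.log (q β) = Real.log (a β.1) + Real.log (b β.2) := Real.log_mul h0 h1
      rw [this]; ring
    simp_rw [step1]
    rw [Finset.sum_add_distrib]
    congr 1
    · rw [Fintype.sum_prod_type]
      calc ∑ i, ∑ s, r (i, s) * Real.log (a i)
          = ∑ i, (∑ s, r (i, s)) * Real.log (a i) := by simp [Finset.sum_mul]
        _ = ∑ i, a i * Real.log (a i) := by simp_rw [hrA]
    · rw [Fintype.sum_prod_type, Finset.sum_comm]
      calc ∑ k, ∑ i, r (i, k) * Real.log (b k)
          = ∑ k, (∑ i, r (i, k)) * Real.log (b k) := by simp [Finset.sum_mul]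
        _ = ∑ k, b k * Real.log (b k) := by simp_rw [hrB]
  -- entropies in terms of eigenvalues
  have hSD : vnEntropy D = ∑ α, Real.negMulLog (p α) := by
    simp only [vnEntropy]
    rw [dif_pos hH]
  have hSA : vnEntropy (ptraceR D) = ∑ i, Real.negMulLog (a i) := by
    simp only [vnEntropy]
    rw [dif_pos hA.1]
  have hSB : vnEntropy (ptraceL D) = ∑ k, Real.negMulLog (b k) := by
    simp only [vnEntropy]
    rw [dif_pos hB.1]
  have hnmlD : ∑ α, Real.negMulLog (p α) = -∑ α, p α * Real.log (p α) := by
    simp [Real.negMulLog, neg_mul, Finset.sum_neg_distrib]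
  have hnmlA : ∑ i, Real.negMulLog (a i) = -∑ i, a i * Real.log (a i) := by
    simp [Real.negMulLog, neg_mul, Finset.sum_neg_distrib]
  have hnmlB : ∑ k, Real.negMulLog (b k) = -∑ k, b k * Real.log (b k) := by
    simp [Real.negMulLog, neg_mul, Finset.sum_neg_distrib]
  -- the product decomposition of the tensor of the marginals
  have hkron : ptraceR D ⊗ₖ ptraceL D
      = V * Matrix.diagonal (fun β => ((q β : ℝ) : ℂ)) * star V := by
    have hdd : (Matrix.diagonal (fun i => ((a i : ℝ) : ℂ))) ⊗ₖ
        (Matrix.diagonal (fun k => ((b k : ℝ) : ℂ)))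
        = Matrix.diagonal (fun β : Fin m × Fin n => ((q β : ℝ) : ℂ)) := by
      rw [Matrix.diagonal_kronecker_diagonal]
      congr 1
      funext β
      rw [hqdef]
      push_cast
      rfl
    calc ptraceR D ⊗ₖ ptraceL D
        = (UA * Matrix.diagonal (fun i => ((a i : ℝ) : ℂ)) * star UA) ⊗ₖ
            (UB * Matrix.diagonal (fun k => ((b k : ℝ) : ℂ)) * star UB) := by
          rw [← hspecA, ← hspecB]
      _ = (UA ⊗ₖ UB) * ((Matrix.diagonal (fun i => ((a i : ℝ) : ℂ))) ⊗ₖ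
            (Matrix.diagonal (fun k => ((b k : ℝ) : ℂ)))) * ((star UA) ⊗ₖ (star UB)) := by
          rw [← Matrix.mul_kronecker_mul, ← Matrix.mul_kronecker_mul]
      _ = V * Matrix.diagonal (fun β => ((q β : ℝ) : ℂ)) * star V := by
          rw [hdd, ← hstarV, hVdef]
  constructor
  · -- the subadditivity inequality
    rw [hSD, hSA, hSB, hnmlD, hnmlA, hnmlB]
    linarith [hineq, hsplit]
  constructor
  · -- equality implies product state
    intro heq
    have h0 : (∑ α, p α * Real.log (p α)) - (∑ β, r β * Real.log (q β)) = 0 := by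
      rw [hSD, hSA, hSB, hnmlD, hnmlA, hnmlB] at heq
      linarith [hsplit]
    have hPQ := heqc h0
    have hcommute : Matrix.diagonal (fun α => ((p α : ℝ) : ℂ)) * W
        = W * Matrix.diagonal (fun β => ((q β : ℝ) : ℂ)) := by
      ext α β
      rw [Matrix.diagonal_mul, Matrix.mul_diagonal]
      rcases hPQ α β with h | h
      · have hw : W α β = 0 := by
          have : Complex.normSq (W α β) = 0 := h
          exact Complex.normSq_eq_zero.mp this
        rw [hw]; ring
      · rw [h]; ring
    have hstarU : star U = W * star V := by
      rw [hWdef, Matrix.mul_assoc, Matrix.mem_unitaryGroup_iff.mp hV, Matrix.mul_one]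
    have hUW : U * W = V := by
      rw [hWdef, ← Matrix.mul_assoc, Matrix.mem_unitaryGroup_iff.mp hU, Matrix.one_mul]
    calc D = U * Matrix.diagonal (fun α => ((p α : ℝ) : ℂ)) * star U := hspec
      _ = U * Matrix.diagonal (fun α => ((p α : ℝ) : ℂ)) * (W * star V) := by rw [← hstarU]
      _ = U * (Matrix.diagonal (fun α => ((p α : ℝ) : ℂ)) * W) * star V := by
          simp only [Matrix.mul_assoc]
      _ = U * (W * Matrix.diagonal (fun β => ((q β : ℝ) : ℂ))) * star V := by rw [hcommute]
      _ = (U * W) * Matrix.diagonal (fun β => ((q β : ℝ) : ℂ)) * star V := by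
          simp only [Matrix.mul_assoc]
      _ = V * Matrix.diagonal (fun β => ((q β : ℝ) : ℂ)) * star V := by rw [hUW]
      _ = ptraceR D ⊗ₖ ptraceL D := hkron.symm
  · -- product state implies equality
    intro hprod
    have hqdecomp : D = V * Matrix.diagonal (fun β => ((q β : ℝ) : ℂ)) * star V := by
      rw [hprod]; exact hkron
    have hmain : ∑ α, Real.negMulLog (p α) = ∑ β, Real.negMulLog (q β) :=
      eig_multiset hH hV q hqdecomp Real.negMulLog
    have hqsum : ∑ β, Real.negMulLog (q β)
        = (∑ i, Real.negMulLog (a i)) + (∑ k, Real.negMulLog (b k)) := by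
      have step : ∀ β : Fin m × Fin n, Real.negMulLog (q β)
          = b β.2 * Real.negMulLog (a β.1) + a β.1 * Real.negMulLog (b β.2) := fun β =>
        Real.negMulLog_mul (a β.1) (b β.2)
      simp_rw [step]
      rw [Finset.sum_add_distrib]
      congr 1
      · rw [Fintype.sum_prod_type]
        calc ∑ i, ∑ k, b k * Real.negMulLog (a i)
            = ∑ i, (∑ k, b k) * Real.negMulLog (a i) := by simp [Finset.sum_mul]
          _ = ∑ i, Real.negMulLog (a i) := by rw [hb1]; simp
      · rw [Fintype.sum_prod_type, Finset.sum_comm]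
        calc ∑ k, ∑ i, a i * Real.negMulLog (b k)
            = ∑ k, (∑ i, a i) * Real.negMulLog (b k) := by simp [Finset.sum_mul]
          _ = ∑ k, Real.negMulLog (b k) := by rw [ha1]; simp
    rw [hSD, hSA, hSB, hmain, hqsum]


end TAL
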